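/- arXiv:1205.1868 — 5 statements merged into one kernel-verified Lean document; each statement's English description precedes it below -/
import Mathlib

section
/- Tail sum lemma. Let c be the constant from the spectral conditions on W and let φ∈Ψ. Then for every integer s with k₀−1 ≤ s ≤ m−1, ∑_{k=s+1}^m ‖P_L φ_k‖²/λ_k ≤ (c+2)·φ(s+1)/λ_{s+1}. -/
open scoped BigOperators

noncomputable section

/-- squared norm of the orthogonal projection of `x` onto `L` -/
def projNormSq {m : ℕ} (L : Submodule ℝ (EuclideanSpace ℝ (Fin m)))
    (x : EuclideanSpace ℝ (Fin m)) : ℝ :=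
  ‖(L.orthogonalProjectionOnto x : EuclideanSpace ℝ (Fin m))‖ ^ 2

/-- **Tail sum lemma.** Under the spectral assumptions on `W` (eigenvalues
`0 ≤ λ₁ ≤ … ≤ λ_m`, orthonormal eigenvectors `φ₁,…,φ_m`), with `c` the constant from those
assumptions and `φ ∈ Ψ`, for every integer `s` with `k₀ − 1 ≤ s ≤ m − 1`,
`∑_{k=s+1}^m ‖P_L φ_k‖²/λ_k ≤ (c+2) φ(s+1)/λ_{s+1}`. -/
theorem tail_sum_lemma
    (m : ℕ) (hm : 2 ≤ m) (c : ℝ) (hc : 0 < c)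
    (lam : ℕ → ℝ) (k0 : ℕ)
    (hlam_nonneg : ∀ k, 1 ≤ k → k ≤ m → 0 ≤ lam k)
    (hlam_mono : ∀ k, 1 ≤ k → k < m → lam k ≤ lam (k + 1))
    (hk0_mem : 1 ≤ k0 ∧ k0 ≤ m) (hk0_pos : 0 < lam k0)
    (hk0_min : ∀ k, 1 ≤ k → k ≤ m → 0 < lam k → k0 ≤ k)
    (hratio : ∀ k, k0 ≤ k → k < m → ((k : ℝ) + 1) / lam (k + 1) ≤ (k : ℝ) / lam k)
    (hgap : ∀ k, k0 ≤ k → k < m → lam (k + 1) ≤ c * lam k)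
    (hsum : ∀ s, k0 ≤ s → s ≤ m → ∑ k ∈ Finset.Icc s m, (lam k)⁻¹ ≤ c * s / lam s)
    (phi : ℕ → EuclideanSpace ℝ (Fin m))
    (horth : Orthonormal ℝ (fun k : Fin m => phi ((k : ℕ) + 1)))
    (L : Submodule ℝ (EuclideanSpace ℝ (Fin m)))
    (f : ℕ → ℝ)
    (hf_mono : ∀ k, k < m → f k ≤ f (k + 1))
    (hf_ratio : ∀ k, 1 ≤ k → k < m → f (k + 1) / ((k : ℝ) + 1) ≤ f k / k)
    (hf_dom : ∀ k, k ≤ m → ∑ j ∈ Finset.Icc 1 k, projNormSq L (phi j) ≤ f k)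
    (s : ℕ) (hs_lb : k0 ≤ s + 1) (hs_ub : s + 1 ≤ m) :
    ∑ k ∈ Finset.Icc (s + 1) m, projNormSq L (phi k) / lam k ≤
      (c + 2) * f (s + 1) / lam (s + 1) := by
  simp only [div_eq_mul_inv]
  -- basic facts
  have hp_nonneg : ∀ k, 0 ≤ projNormSq L (phi k) := by
    intro k; unfold projNormSq; positivity
  set S : ℕ → ℝ := fun n => ∑ j ∈ Finset.Icc 1 n, projNormSq L (phi j) with hS
  have hS_nonneg : ∀ n, 0 ≤ S n := by
    intro n; simp only [hS]
    exact Finset.sum_nonneg fun j _ => hp_nonneg j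
  have hSf : ∀ n, n ≤ m → S n ≤ f n := by
    intro n hn; simp only [hS]; exact hf_dom n hn
  have hSrec : ∀ n, S (n + 1) = S n + projNormSq L (phi (n + 1)) := by
    intro n; simp only [hS]
    exact Finset.sum_Icc_succ_top (by omega) _
  have hmono' : ∀ b, b ≤ m → ∀ a, 1 ≤ a → a ≤ b → lam a ≤ lam b := by
    intro b
    induction b with
    | zero => intro _ a ha hab; omega
    | succ n ih =>
      intro hbm a ha hab
      rcases Nat.eq_or_lt_of_le hab with h | h
      · rw [h]
      · have h1 : lam a ≤ lam n := ih (by omega) a ha (by omega)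
        have h2 : lam n ≤ lam (n + 1) := hlam_mono n (by omega) (by omega)
        linarith
  have hlampos : ∀ k, k0 ≤ k → k ≤ m → 0 < lam k := by
    intro k h1 h2
    exact lt_of_lt_of_le hk0_pos (hmono' k h2 k0 hk0_mem.1 h1)
  have hμnonneg : ∀ k, k0 ≤ k → k ≤ m → 0 ≤ (lam k)⁻¹ := by
    intro k h1 h2; exact inv_nonneg.mpr (hlampos k h1 h2).le
  have hμanti : ∀ k, k0 ≤ k → k < m → (lam (k + 1))⁻¹ ≤ (lam k)⁻¹ := by
    intro k h1 h2
    exact inv_anti₀ (hlampos k h1 (by omega)) (hlam_mono k (by omega) h2)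
  have hs1R : (0:ℝ) < (s:ℝ) + 1 := by positivity
  set A : ℝ := f (s + 1) / ((s:ℝ) + 1) with hA
  have hF_nonneg : 0 ≤ f (s + 1) := le_trans (hS_nonneg (s + 1)) (hSf (s + 1) hs_ub)
  have hA_nonneg : 0 ≤ A := div_nonneg hF_nonneg hs1R.le
  -- ratio bound for f
  have hfr : ∀ n, s + 1 ≤ n → n ≤ m → f n / (n:ℝ) ≤ A := by
    intro n
    induction n with
    | zero => omega
    | succ n ih =>
      intro h1 h2
      rcases Nat.eq_or_lt_of_le h1 with h | h
      · rw [← h, hA]; push_cast; exact le_rfl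
      · have hs1n : s + 1 ≤ n := by omega
        have hr := hf_ratio n (by omega) (by omega)
        have hcast : ((n + 1 : ℕ) : ℝ) = (n:ℝ) + 1 := by push_cast; ring
        rw [hcast]
        exact le_trans hr (ih hs1n (by omega))
  have hfA : ∀ n, s + 1 ≤ n → n ≤ m → f n ≤ (n:ℝ) * A := by
    intro n h1 h2
    have hn0 : (0:ℝ) < (n:ℝ) := by
      have : 0 < n := by omega
      exact_mod_cast this
    have := (div_le_iff₀ hn0).mp (hfr n h1 h2)
    linarith
  -- main Abel-type induction
  have main : ∀ n, s + 1 ≤ n → n ≤ m →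
      (∑ k ∈ Finset.Icc (s + 1) n, projNormSq L (phi k) * (lam k)⁻¹) ≤
        S n * (lam n)⁻¹ +
          A * (((s:ℝ) + 1) * (lam (s + 1))⁻¹ +
            (∑ k ∈ Finset.Icc (s + 2) n, (lam k)⁻¹) - (n:ℝ) * (lam n)⁻¹) := by
    intro n
    induction n with
    | zero => omega
    | succ n ih =>
      intro h1 h2
      rcases Nat.eq_or_lt_of_le h1 with h | h
      · -- base case n + 1 = s + 1
        have hsn : s = n := by omega
        subst hsn
        rw [Finset.Icc_self, Finset.sum_singleton,
          Finset.Icc_eq_empty (by omega : ¬ s + 2 ≤ s + 1), Finset.sum_empty]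
        have hple : projNormSq L (phi (s + 1)) ≤ S (s + 1) := by
          simp only [hS]
          exact Finset.single_le_sum (fun i _ => hp_nonneg i)
            (Finset.mem_Icc.mpr ⟨by omega, le_rfl⟩)
        have hμ : 0 ≤ (lam (s + 1))⁻¹ := hμnonneg (s + 1) hs_lb hs_ub
        have h3 := mul_le_mul_of_nonneg_right hple hμ
        push_cast
        have hz : A * (((s:ℝ) + 1) * (lam (s + 1))⁻¹ + 0 -
            ((s:ℝ) + 1) * (lam (s + 1))⁻¹) = 0 := by ring
        linarith
      · -- inductive step
        have hsn : s + 1 ≤ n := by omega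
        have hnm : n ≤ m := by omega
        have IH := ih hsn hnm
        rw [Finset.sum_Icc_succ_top (by omega : s + 1 ≤ n + 1),
          Finset.sum_Icc_succ_top (by omega : s + 2 ≤ n + 1), hSrec n]
        push_cast
        have hd : (lam (n + 1))⁻¹ ≤ (lam n)⁻¹ := hμanti n (by omega) (by omega)
        have hSA : S n ≤ (n:ℝ) * A := (hSf n hnm).trans (hfA n hsn hnm)
        have hprod : 0 ≤ ((n:ℝ) * A - S n) * ((lam n)⁻¹ - (lam (n + 1))⁻¹) :=
          mul_nonneg (by linarith) (by linarith)
        nlinarith [IH, hprod]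
  -- conclude
  have hmain := main m hs_ub le_rfl
  have hSmA : S m ≤ (m:ℝ) * A := (hSf m le_rfl).trans (hfA m hs_ub le_rfl)
  have hμm : 0 ≤ (lam m)⁻¹ := hμnonneg m (by omega) le_rfl
  have hprodm : 0 ≤ ((m:ℝ) * A - S m) * (lam m)⁻¹ := mul_nonneg (by linarith) hμm
  have hG : (∑ k ∈ Finset.Icc (s + 2) m, (lam k)⁻¹) ≤
      ∑ k ∈ Finset.Icc (s + 1) m, (lam k)⁻¹ := by
    apply Finset.sum_le_sum_of_subset_of_nonneg (Finset.Icc_subset_Icc (by omega) le_rfl)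
    intro i hi _
    have hi' := Finset.mem_Icc.mp hi
    exact hμnonneg i (by omega) hi'.2
  have hsum' := hsum (s + 1) hs_lb hs_ub
  push_cast at hsum'
  have hGc : (∑ k ∈ Finset.Icc (s + 2) m, (lam k)⁻¹) ≤
      c * ((s:ℝ) + 1) * (lam (s + 1))⁻¹ := by
    have he : c * ((s:ℝ) + 1) / lam (s + 1) = c * ((s:ℝ) + 1) * (lam (s + 1))⁻¹ := by
      rw [div_eq_mul_inv]
    linarith
  have hAG : A * (∑ k ∈ Finset.Icc (s + 2) m, (lam k)⁻¹) ≤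
      A * (c * ((s:ℝ) + 1) * (lam (s + 1))⁻¹) := mul_le_mul_of_nonneg_left hGc hA_nonneg
  have hA1 : A * ((s:ℝ) + 1) = f (s + 1) := div_mul_cancel₀ _ (ne_of_gt hs1R)
  have hA1' : (A * ((s:ℝ) + 1)) * (lam (s + 1))⁻¹ = f (s + 1) * (lam (s + 1))⁻¹ := by
    rw [hA1]
  have hA1'' : c * ((A * ((s:ℝ) + 1)) * (lam (s + 1))⁻¹) =
      c * (f (s + 1) * (lam (s + 1))⁻¹) := by rw [hA1]
  have hFμ : 0 ≤ f (s + 1) * (lam (s + 1))⁻¹ :=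
    mul_nonneg hF_nonneg (hμnonneg (s + 1) hs_lb hs_ub)
  nlinarith [hmain, hprodm, hAG, hA1', hA1'', hFμ]

end
end

section
/- The coherence function φ̄ belongs to Ψ and is its smallest element: φ̄ is nondecreasing on {0,1,…,m}, k↦φ̄(k)/k is nonincreasing on {1,…,m}, ∑_{j=1}^k ‖P_L φ_j‖² ≤ φ̄(k) for all k=0,…,m, and for every φ∈Ψ one has φ̄(k) ≤ φ(k) for all k=0,…,m. -/
open scoped BigOperators

noncomputable section

/-- the coherence function `φ̄(k) = max_{1≤t≤k} t · max_{t≤j≤m} (1/j) ∑_{i=1}^j g(i)`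
(with `φ̄(0) = 0`, realized as the supremum of an empty set) -/
def cohFn (m : ℕ) (g : ℕ → ℝ) (k : ℕ) : ℝ :=
  sSup ((fun t : ℕ => (t : ℝ) *
    sSup ((fun j : ℕ => (∑ i ∈ Finset.Icc 1 j, g i) / j) '' Set.Icc t m)) '' Set.Icc 1 k)

section Aux

private def auxB (m : ℕ) (g : ℕ → ℝ) (t : ℕ) : ℝ :=
  sSup ((fun j : ℕ => (∑ i ∈ Finset.Icc 1 j, g i) / j) '' Set.Icc t m)

private lemma cohFn_eq (m : ℕ) (g : ℕ → ℝ) (k : ℕ) :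
    cohFn m g k = sSup ((fun t : ℕ => (t : ℝ) * auxB m g t) '' Set.Icc 1 k) := rfl

private lemma auxA_nonneg (g : ℕ → ℝ) (hg : ∀ i, 0 ≤ g i) (j : ℕ) :
    0 ≤ (∑ i ∈ Finset.Icc 1 j, g i) / j :=
  div_nonneg (Finset.sum_nonneg fun i _ => hg i) (Nat.cast_nonneg j)

private lemma auxB_bdd (m : ℕ) (g : ℕ → ℝ) (t : ℕ) :
    BddAbove ((fun j : ℕ => (∑ i ∈ Finset.Icc 1 j, g i) / j) '' Set.Icc t m) :=
  ((Set.finite_Icc t m).image _).bddAbove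

private lemma le_auxB (m : ℕ) (g : ℕ → ℝ) {t j : ℕ} (h1 : t ≤ j) (h2 : j ≤ m) :
    (∑ i ∈ Finset.Icc 1 j, g i) / j ≤ auxB m g t :=
  le_csSup (auxB_bdd m g t) ⟨j, ⟨h1, h2⟩, rfl⟩

private lemma auxB_le (m : ℕ) (g : ℕ → ℝ) {t : ℕ} {c : ℝ} (htm : t ≤ m)
    (h : ∀ j, t ≤ j → j ≤ m → (∑ i ∈ Finset.Icc 1 j, g i) / j ≤ c) :
    auxB m g t ≤ c := by
  refine csSup_le ⟨_, ⟨t, ⟨le_rfl, htm⟩, rfl⟩⟩ ?_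
  rintro y ⟨j, ⟨hj1, hj2⟩, rfl⟩
  exact h j hj1 hj2

private lemma auxB_nonneg (m : ℕ) (g : ℕ → ℝ) (hg : ∀ i, 0 ≤ g i) {t : ℕ} (ht : t ≤ m) :
    0 ≤ auxB m g t :=
  (auxA_nonneg g hg t).trans (le_auxB m g le_rfl ht)

private lemma auxB_anti (m : ℕ) (g : ℕ → ℝ) {s t : ℕ} (hst : s ≤ t) (htm : t ≤ m) :
    auxB m g t ≤ auxB m g s :=
  csSup_le_csSup (auxB_bdd m g s)
    ⟨_, ⟨t, ⟨le_rfl, htm⟩, rfl⟩⟩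
    (Set.image_mono (Set.Icc_subset_Icc_left hst))

private lemma cohFn_bdd (m : ℕ) (g : ℕ → ℝ) (k : ℕ) :
    BddAbove ((fun t : ℕ => (t : ℝ) * auxB m g t) '' Set.Icc 1 k) :=
  ((Set.finite_Icc 1 k).image _).bddAbove

private lemma le_cohFn (m : ℕ) (g : ℕ → ℝ) {t k : ℕ} (h1 : 1 ≤ t) (h2 : t ≤ k) :
    (t : ℝ) * auxB m g t ≤ cohFn m g k :=
  le_csSup (cohFn_bdd m g k) ⟨t, ⟨h1, h2⟩, rfl⟩

private lemma cohFn_le (m : ℕ) (g : ℕ → ℝ) {k : ℕ} {c : ℝ} (hk : 1 ≤ k)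
    (h : ∀ t, 1 ≤ t → t ≤ k → (t : ℝ) * auxB m g t ≤ c) :
    cohFn m g k ≤ c := by
  rw [cohFn_eq]
  refine csSup_le ⟨_, ⟨1, ⟨le_rfl, hk⟩, rfl⟩⟩ ?_
  rintro x ⟨t, ⟨h1, h2⟩, rfl⟩
  exact h t h1 h2

private lemma cohFn_zero (m : ℕ) (g : ℕ → ℝ) : cohFn m g 0 = 0 := by
  rw [cohFn_eq]
  simp [Real.sSup_empty]

private lemma cohFn_nonneg (m : ℕ) (g : ℕ → ℝ) (hg : ∀ i, 0 ≤ g i) {k : ℕ}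
    (h1 : 1 ≤ k) (hk : k ≤ m) : 0 ≤ cohFn m g k :=
  le_trans (by simpa using auxB_nonneg m g hg (h1.trans hk)) (le_cohFn m g le_rfl h1)

end Aux

/-- **The coherence function `φ̄` belongs to `Ψ` and is its smallest element**: `φ̄` is
nondecreasing on `{0,…,m}`, `k ↦ φ̄(k)/k` is nonincreasing on `{1,…,m}`,
`∑_{j=1}^k ‖P_L φ_j‖² ≤ φ̄(k)` for all `k ≤ m`, and `φ̄ ≤ φ` on `{0,…,m}` for every `φ ∈ Ψ`. -/
theorem cohFn_mem_Psi_and_minimal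
    (m : ℕ) (hm : 2 ≤ m)
    (phi : ℕ → EuclideanSpace ℝ (Fin m))
    (horth : Orthonormal ℝ (fun k : Fin m => phi ((k : ℕ) + 1)))
    (L : Submodule ℝ (EuclideanSpace ℝ (Fin m))) :
    (∀ k l, k ≤ l → l ≤ m →
        cohFn m (fun j => projNormSq L (phi j)) k ≤ cohFn m (fun j => projNormSq L (phi j)) l) ∧
    (∀ k, 1 ≤ k → k < m →
        cohFn m (fun j => projNormSq L (phi j)) (k + 1) / ((k : ℝ) + 1) ≤
          cohFn m (fun j => projNormSq L (phi j)) k / k) ∧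
    (∀ k, k ≤ m →
        ∑ j ∈ Finset.Icc 1 k, projNormSq L (phi j) ≤
          cohFn m (fun j => projNormSq L (phi j)) k) ∧
    (∀ f : ℕ → ℝ,
        (∀ k, k < m → f k ≤ f (k + 1)) →
        (∀ k, 1 ≤ k → k < m → f (k + 1) / ((k : ℝ) + 1) ≤ f k / k) →
        (∀ k, k ≤ m → ∑ j ∈ Finset.Icc 1 k, projNormSq L (phi j) ≤ f k) →
        ∀ k, k ≤ m → cohFn m (fun j => projNormSq L (phi j)) k ≤ f k) := by
  set g : ℕ → ℝ := fun j => projNormSq L (phi j) with hgdef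
  have hg : ∀ i, 0 ≤ g i := fun i => sq_nonneg _
  refine ⟨?_, ?_, ?_, ?_⟩
  · -- monotone
    intro k l hkl hlm
    rcases Nat.eq_zero_or_pos k with rfl | hk
    · rcases Nat.eq_zero_or_pos l with rfl | hl
      · exact le_rfl
      · rw [cohFn_zero]
        exact cohFn_nonneg m g hg hl hlm
    · rw [cohFn_eq, cohFn_eq]
      exact csSup_le_csSup (cohFn_bdd m g l) ⟨_, ⟨1, ⟨le_rfl, hk⟩, rfl⟩⟩
        (Set.image_mono (Set.Icc_subset_Icc_right hkl))
  · -- ratio nonincreasing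
    intro k hk hkm
    have hkpos : (0 : ℝ) < (k : ℝ) := by exact_mod_cast hk
    have hc0 : 0 ≤ cohFn m g k := cohFn_nonneg m g hg hk hkm.le
    have key : cohFn m g (k + 1) ≤ cohFn m g k * ((k : ℝ) + 1) / k := by
      refine cohFn_le m g (by omega) ?_
      intro t ht1 htk
      rw [le_div_iff₀ hkpos]
      rcases Nat.lt_or_ge t (k + 1) with h | h
      · have h1 : (t : ℝ) * auxB m g t ≤ cohFn m g k := le_cohFn m g ht1 (by omega)
        nlinarith [mul_le_mul_of_nonneg_right h1 hkpos.le]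
      · have ht : t = k + 1 := le_antisymm htk h
        subst ht
        have hB1 : auxB m g (k + 1) ≤ auxB m g k := auxB_anti m g (by omega) (by omega)
        have hB2 : 0 ≤ auxB m g (k + 1) := auxB_nonneg m g hg (by omega)
        have h1 : (k : ℝ) * auxB m g k ≤ cohFn m g k := le_cohFn m g hk le_rfl
        have hcast : ((k + 1 : ℕ) : ℝ) = (k : ℝ) + 1 := by push_cast; ring
        rw [hcast]
        nlinarith [mul_le_mul_of_nonneg_left hB1 (by positivity : (0:ℝ) ≤ ((k:ℝ)+1)),
          mul_le_mul_of_nonneg_right h1 (by positivity : (0:ℝ) ≤ ((k:ℝ)+1))]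
    rw [div_le_div_iff₀ (by positivity) hkpos]
    calc cohFn m g (k + 1) * (k : ℝ) ≤ (cohFn m g k * ((k : ℝ) + 1) / k) * k :=
          mul_le_mul_of_nonneg_right key hkpos.le
      _ = cohFn m g k * ((k : ℝ) + 1) := by field_simp
  · -- sum bound
    intro k hk
    rcases Nat.eq_zero_or_pos k with rfl | hk1
    · rw [cohFn_zero]; simp
    · have hkpos : ((k : ℝ)) ≠ 0 := by positivity
      have h1 : (∑ i ∈ Finset.Icc 1 k, g i) = (k : ℝ) * ((∑ i ∈ Finset.Icc 1 k, g i) / k) := by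
        field_simp
      calc (∑ i ∈ Finset.Icc 1 k, g i)
          = (k : ℝ) * ((∑ i ∈ Finset.Icc 1 k, g i) / k) := h1
        _ ≤ (k : ℝ) * auxB m g k :=
            mul_le_mul_of_nonneg_left (le_auxB m g le_rfl hk) (Nat.cast_nonneg k)
        _ ≤ cohFn m g k := le_cohFn m g hk1 le_rfl
  · -- minimality
    intro f h1 h2 h3 k hk
    have hmono : ∀ a b, a ≤ b → b ≤ m → f a ≤ f b := by
      intro a b hab hbm
      induction b, hab using Nat.le_induction with
      | base => exact le_rfl
      | succ b hb ih => exact (ih (by omega)).trans (h1 b (by omega))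
    have hratio : ∀ t j, 1 ≤ t → t ≤ j → j ≤ m → f j / j ≤ f t / t := by
      intro t j ht htj hjm
      induction j, htj using Nat.le_induction with
      | base => exact le_rfl
      | succ j hj ih =>
        have hcast : ((j + 1 : ℕ) : ℝ) = (j : ℝ) + 1 := by push_cast; ring
        calc f (j + 1) / ((j + 1 : ℕ) : ℝ) = f (j + 1) / ((j : ℝ) + 1) := by rw [hcast]
          _ ≤ f j / j := h2 j (ht.trans hj) (by omega)
          _ ≤ f t / t := ih (by omega)
    rcases Nat.eq_zero_or_pos k with rfl | hk1
    · rw [cohFn_zero]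
      have := h3 0 (by omega)
      simpa using this
    · refine cohFn_le m g hk1 ?_
      intro t ht1 htk
      have htpos : (0 : ℝ) < (t : ℝ) := by exact_mod_cast ht1
      rw [mul_comm, ← le_div_iff₀ htpos]
      refine auxB_le m g (htk.trans hk) ?_
      intro j htj hjm
      have hjpos : (0 : ℝ) < (j : ℝ) := by exact_mod_cast ht1.trans htj
      calc (∑ i ∈ Finset.Icc 1 j, g i) / j ≤ f j / j := by
            gcongr
            exact h3 j hjm
        _ ≤ f t / t := hratio t j ht1 htj hjm
        _ ≤ f k / t := by gcongr; exact hmono t k htk hk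

end
end

section
/- Variance and boundedness of the sampling matrix. Let (X,X',Y) be a random triple with X,X' independent uniform on V and Y∈{−1,1}, and set Z := Y·E_{X,X'} − E(Y·E_{X,X'}). Then ‖Z‖ ≤ 2 almost surely and ‖E Z²‖ ≤ 1/m, where ‖·‖ is the operator norm. -/
open MeasureTheory ProbabilityTheory Matrix

noncomputable section

/-- uniform distribution on `Fin m` -/
def uniformFin (m : ℕ) : Measure (Fin m) := ((m : ENNReal))⁻¹ • Measure.count

/-- operator (spectral) norm of a matrix -/
def opNorm {m : ℕ} (A : Matrix (Fin m) (Fin m) ℝ) : ℝ := ‖Matrix.toEuclideanCLM (𝕜 := ℝ) A‖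

/-- the symmetrized elementary matrix `E_{u,v} = ½(e_u ⊗ e_v + e_v ⊗ e_u)` -/
def Ematrix {m : ℕ} (u v : Fin m) : Matrix (Fin m) (Fin m) ℝ :=
  (1 / 2 : ℝ) • (Matrix.single u v 1 + Matrix.single v u 1)

lemma opNorm_le_rowsum {m : ℕ} (A : Matrix (Fin m) (Fin m) ℝ) (hsym : ∀ a b, A a b = A b a)
    {c : ℝ} (hc : 0 ≤ c) (h : ∀ a, ∑ b, |A a b| ≤ c) : opNorm A ≤ c := by
  refine ContinuousLinearMap.opNorm_le_bound _ hc (fun x => ?_)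
  have hxn : 0 ≤ ‖x‖ := norm_nonneg x
  rw [EuclideanSpace.norm_eq]
  have hsq : ∀ a, ((Matrix.toEuclideanCLM (𝕜 := ℝ) A) x a) = ∑ b, A a b * x b := by
    intro a
    have := congrFun (Matrix.ofLp_toEuclideanCLM (𝕜 := ℝ) A x) a
    simpa [Matrix.toLin'_apply, Matrix.mulVec, dotProduct] using this
  have key : ∑ a, ‖(Matrix.toEuclideanCLM (𝕜 := ℝ) A) x a‖ ^ 2 ≤ (c * ‖x‖)^2 := by
    have step1 : ∀ a, ‖(Matrix.toEuclideanCLM (𝕜 := ℝ) A) x a‖ ^ 2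
        ≤ c * ∑ b, |A a b| * (x b)^2 := by
      intro a
      rw [hsq a, Real.norm_eq_abs, sq_abs]
      have habs : (∑ b, A a b * x b)^2 ≤ (∑ b, |A a b| * |x b|)^2 := by
        have h1 : |∑ b, A a b * x b| ≤ ∑ b, |A a b| * |x b| := by
          refine (Finset.abs_sum_le_sum_abs _ _).trans ?_
          simp [abs_mul, le_refl]
        calc (∑ b, A a b * x b)^2 = |∑ b, A a b * x b|^2 := (sq_abs _).symm
          _ ≤ (∑ b, |A a b| * |x b|)^2 := by
              apply pow_le_pow_left₀ (abs_nonneg _) h1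
      have cs2 := Finset.sum_mul_sq_le_sq_mul_sq Finset.univ
        (fun b => Real.sqrt (|A a b|)) (fun b => Real.sqrt (|A a b|) * |x b|)
      have e3 : ∀ b : Fin m, Real.sqrt (|A a b|) * (Real.sqrt (|A a b|) * |x b|) = |A a b| * |x b| := by
        intro b; rw [← mul_assoc, Real.mul_self_sqrt (abs_nonneg _)]
      have e4 : ∀ b : Fin m, (Real.sqrt (|A a b|))^2 = |A a b| := fun b => Real.sq_sqrt (abs_nonneg _)
      have e5 : ∀ b : Fin m, (Real.sqrt (|A a b|) * |x b|)^2 = |A a b| * (x b)^2 := by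
        intro b; rw [mul_pow, e4, sq_abs]
      simp only [e3, e4, e5] at cs2
      calc (∑ b, A a b * x b)^2 ≤ (∑ b, |A a b| * |x b|)^2 := habs
        _ ≤ (∑ b, |A a b|) * ∑ b, |A a b| * (x b)^2 := cs2
        _ ≤ c * ∑ b, |A a b| * (x b)^2 := by
            apply mul_le_mul_of_nonneg_right (h a)
            exact Finset.sum_nonneg fun b _ => mul_nonneg (abs_nonneg _) (sq_nonneg _)
    calc ∑ a, ‖(Matrix.toEuclideanCLM (𝕜 := ℝ) A) x a‖ ^ 2
        ≤ ∑ a, c * ∑ b, |A a b| * (x b)^2 := Finset.sum_le_sum fun a _ => step1 a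
      _ = c * ∑ b, (∑ a, |A a b|) * (x b)^2 := by
          rw [← Finset.mul_sum]; congr 1; rw [Finset.sum_comm]
          congr 1; ext b; rw [Finset.sum_mul]
      _ ≤ c * ∑ b, c * (x b)^2 := by
          apply mul_le_mul_of_nonneg_left _ hc
          apply Finset.sum_le_sum; intro b _
          apply mul_le_mul_of_nonneg_right _ (sq_nonneg _)
          calc ∑ a, |A a b| = ∑ a, |A b a| := by simp_rw [fun a => hsym a b]
            _ ≤ c := h b
      _ = (c * ‖x‖)^2 := by
          rw [EuclideanSpace.norm_eq]
          rw [mul_pow, Real.sq_sqrt (by positivity)]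
          rw [← Finset.mul_sum]; ring_nf
          simp [Real.norm_eq_abs, sq_abs]
  calc Real.sqrt (∑ a, ‖(Matrix.toEuclideanCLM (𝕜 := ℝ) A) x a‖ ^ 2)
      ≤ Real.sqrt ((c * ‖x‖)^2) := Real.sqrt_le_sqrt key
    _ = c * ‖x‖ := Real.sqrt_sq (by positivity)

lemma Ematrix_apply {m : ℕ} (u v a b : Fin m) :
    Ematrix u v a b = (1/2 : ℝ) * ((if u = a ∧ v = b then 1 else 0) + (if v = a ∧ u = b then 1 else 0)) := by
  simp [Ematrix, Matrix.single, Matrix.smul_apply, Matrix.add_apply]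

lemma Ematrix_nonneg {m : ℕ} (u v a b : Fin m) : 0 ≤ Ematrix u v a b := by
  rw [Ematrix_apply]; split_ifs <;> norm_num

lemma Ematrix_le_one {m : ℕ} (u v a b : Fin m) : Ematrix u v a b ≤ 1 := by
  rw [Ematrix_apply]; split_ifs <;> norm_num

lemma Ematrix_comm {m : ℕ} (u v a b : Fin m) : Ematrix u v a b = Ematrix u v b a := by
  rw [Ematrix_apply, Ematrix_apply]
  have : ∀ (p q : Prop) [Decidable p] [Decidable q], ((if p then (1:ℝ) else 0) + (if q then 1 else 0)) = ((if q then (1:ℝ) else 0) + (if p then 1 else 0)) := fun p q _ _ => add_comm _ _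
  rw [this]
  congr 2 <;> simp [and_comm, eq_comm]

lemma Ematrix_rowsum {m : ℕ} (u v a : Fin m) : ∑ b, |Ematrix u v a b| ≤ 1 := by
  have : ∀ b, |Ematrix u v a b| = Ematrix u v a b := fun b => abs_of_nonneg (Ematrix_nonneg u v a b)
  simp_rw [this, Ematrix_apply]
  rw [← Finset.mul_sum, Finset.sum_add_distrib]
  have h1 : (∑ b, if u = a ∧ v = b then (1:ℝ) else 0) ≤ 1 := by
    by_cases h : u = a <;> simp [h, Finset.sum_ite_eq]
  have h2 : (∑ b, if v = a ∧ u = b then (1:ℝ) else 0) ≤ 1 := by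
    by_cases h : v = a <;> simp [h, Finset.sum_ite_eq]
  linarith

lemma EE_apply {m : ℕ} (u v a b : Fin m) :
    (Ematrix u v * Ematrix u v) a b =
      (if a = b ∧ u = a ∧ v = a then (1:ℝ)/2 else 0) +
      (if a = b ∧ u = a then (1:ℝ)/4 else 0) + (if a = b ∧ v = a then (1:ℝ)/4 else 0) := by
  have expand : Ematrix u v * Ematrix u v = ((1/4 : ℝ)) •
      (single u v (1:ℝ) * single u v 1 + single u v 1 * single v u 1
        + (single v u 1 * single u v 1 + single v u 1 * single v u 1)) := by
    rw [Ematrix, smul_mul_smul_comm, add_mul, mul_add, mul_add]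
    norm_num
  by_cases huv : u = v
  · subst huv
    rw [expand]
    simp only [Matrix.single_mul_single_same, one_mul]
    simp only [Matrix.smul_apply, Matrix.add_apply, Matrix.single, Matrix.of_apply]
    split_ifs <;> first | omega | norm_num
  · rw [expand]
    rw [Matrix.single_mul_single_of_ne (h := (Ne.symm huv : v ≠ u)),
        Matrix.single_mul_single_of_ne (h := huv),
        Matrix.single_mul_single_same, Matrix.single_mul_single_same]
    simp only [Matrix.smul_apply, Matrix.add_apply, Matrix.zero_apply, Matrix.single, Matrix.of_apply, one_mul]
    split_ifs <;> first | omega | norm_num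

set_option maxHeartbeats 1000000 in
/-- **Variance and boundedness of the sampling matrix.** If `X, X'` are independent uniform on
`V` (`card V = m ≥ 2`) and `Y ∈ {−1,1}`, then `Z := Y·E_{X,X'} − E(Y·E_{X,X'})` satisfies
`‖Z‖ ≤ 2` a.s. and `‖E Z²‖ ≤ 1/m` in operator norm. -/
theorem sampling_matrix_variance_bound
    {Ω : Type*} [MeasureSpace Ω] [IsProbabilityMeasure (ℙ : Measure Ω)]
    (m : ℕ) (hm : 2 ≤ m)
    (X X' : Ω → Fin m) (Y : Ω → ℝ)
    (hXmeas : Measurable X) (hX'meas : Measurable X') (hYmeas : Measurable Y)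
    (hindep : IndepFun X X' ℙ)
    (hXunif : Measure.map X ℙ = uniformFin m)
    (hX'unif : Measure.map X' ℙ = uniformFin m)
    (hY : ∀ᵐ ω ∂ℙ, Y ω = 1 ∨ Y ω = -1)
    (Z : Ω → Matrix (Fin m) (Fin m) ℝ)
    (hZ : ∀ ω, Z ω = Y ω • Ematrix (X ω) (X' ω) -
        Matrix.of fun a b => ∫ ω', Y ω' * Ematrix (X ω') (X' ω') a b ∂ℙ) :
    (∀ᵐ ω ∂ℙ, opNorm (Z ω) ≤ 2) ∧
      opNorm (Matrix.of fun a b => ∫ ω, (Z ω * Z ω) a b ∂ℙ) ≤ 1 / m := by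
  classical
  have hm2 : (2:ℝ) ≤ (m:ℝ) := by exact_mod_cast hm
  have hm0 : (0:ℝ) < (m:ℝ) := by linarith
  set p : ℝ := (m : ℝ)⁻¹ with hp
  have hp0 : 0 < p := by positivity
  have hph : p ≤ 1/2 := by
    rw [hp]; rw [inv_le_comm₀ hm0 (by norm_num)]; linarith
  set c0 : ℝ := p^2/2 + p/2 with hc0
  set M : Matrix (Fin m) (Fin m) ℝ :=
      (Matrix.of fun a b => ∫ ω', Y ω' * Ematrix (X ω') (X' ω') a b ∂ℙ) with hM
  set g : Fin m → Fin m → Ω → ℝ := fun a b ω => Ematrix (X ω) (X' ω) a b with hg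
  -- measurability
  have hgmeas : ∀ a b, Measurable (g a b) := by
    intro a b
    exact (measurable_of_countable (fun q : Fin m × Fin m => Ematrix q.1 q.2 a b)).comp
      (hXmeas.prodMk hX'meas)
  have hgnn : ∀ a b ω, 0 ≤ g a b ω := fun a b ω => Ematrix_nonneg _ _ _ _
  have hgle : ∀ a b ω, g a b ω ≤ 1 := fun a b ω => Ematrix_le_one _ _ _ _
  have hY1 : ∀ᵐ ω ∂ℙ, |Y ω| = 1 := by
    filter_upwards [hY] with ω h
    rcases h with h | h <;> rw [h] <;> norm_num
  -- integrability helper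
  have hintBdd : ∀ (f : Ω → ℝ) (C : ℝ), Measurable f → (∀ᵐ ω ∂ℙ, |f ω| ≤ C) → Integrable f ℙ := by
    intro f C hf hb
    exact Integrable.mono' (integrable_const C) hf.aestronglyMeasurable
      (by filter_upwards [hb] with ω h using by rwa [Real.norm_eq_abs])
  have hintg : ∀ a b, Integrable (g a b) ℙ := fun a b =>
    hintBdd _ 1 (hgmeas a b) (Filter.Eventually.of_forall fun ω => by
      rw [abs_of_nonneg (hgnn a b ω)]; exact hgle a b ω)
  have hintYg : ∀ a b, Integrable (fun ω => Y ω * g a b ω) ℙ := fun a b =>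
    hintBdd _ 1 (hYmeas.mul (hgmeas a b)) (by
      filter_upwards [hY1] with ω h
      rw [abs_mul, h, one_mul, abs_of_nonneg (hgnn a b ω)]; exact hgle a b ω)
  have hintYgYg : ∀ a k b, Integrable (fun ω => (Y ω * g a k ω) * (Y ω * g k b ω)) ℙ := by
    intro a k b
    refine hintBdd _ 1 ((hYmeas.mul (hgmeas a k)).mul (hYmeas.mul (hgmeas k b))) ?_
    filter_upwards [hY1] with ω h
    rw [abs_mul, abs_mul, abs_mul, h, one_mul, one_mul,
      abs_of_nonneg (hgnn a k ω), abs_of_nonneg (hgnn k b ω)]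
    exact mul_le_one₀ (hgle a k ω) (hgnn k b ω) (hgle k b ω)
  -- probabilities
  have hPX : ∀ a, ℙ (X ⁻¹' {a}) = (m:ENNReal)⁻¹ := by
    intro a
    rw [← Measure.map_apply hXmeas (measurableSet_singleton a), hXunif]
    simp [uniformFin, Measure.smul_apply, Measure.count_singleton, smul_eq_mul]
  have hPX' : ∀ a, ℙ (X' ⁻¹' {a}) = (m:ENNReal)⁻¹ := by
    intro a
    rw [← Measure.map_apply hX'meas (measurableSet_singleton a), hX'unif]
    simp [uniformFin, Measure.smul_apply, Measure.count_singleton, smul_eq_mul]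
  have hPXr : ∀ a, (ℙ (X ⁻¹' {a})).toReal = p := by
    intro a; rw [hPX a, ENNReal.toReal_inv]; simp [hp]
  have hPX'r : ∀ a, (ℙ (X' ⁻¹' {a})).toReal = p := by
    intro a; rw [hPX' a, ENNReal.toReal_inv]; simp [hp]
  have hPXX'r : ∀ a b, (ℙ (X ⁻¹' {a} ∩ X' ⁻¹' {b})).toReal = p * p := by
    intro a b
    rw [hindep.measure_inter_preimage_eq_mul _ _ (measurableSet_singleton a)
      (measurableSet_singleton b), hPX a, hPX' b, ENNReal.toReal_mul, ENNReal.toReal_inv]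
    simp [hp]
  have hsX : ∀ a, MeasurableSet (X ⁻¹' {a}) := fun a => hXmeas (measurableSet_singleton a)
  have hsX' : ∀ a, MeasurableSet (X' ⁻¹' {a}) := fun a => hX'meas (measurableSet_singleton a)
  -- integral of indicator
  have hIind : ∀ (s : Set Ω), MeasurableSet s → ∀ (r : ℝ),
      (∫ ω, s.indicator (fun _ => r) ω ∂ℙ) = (ℙ s).toReal * r := by
    intro s hs r
    rw [integral_indicator_const r hs, smul_eq_mul, measureReal_def]
  have hintInd : ∀ (s : Set Ω), MeasurableSet s → ∀ (r : ℝ),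
      Integrable (s.indicator (fun _ => r)) ℙ := by
    intro s hs r
    exact (integrable_const r).indicator hs
  -- if-expressions as indicators
  have hif2 : ∀ (a b : Fin m) (r : ℝ), (fun ω => if X ω = a ∧ X' ω = b then r else 0)
      = (X ⁻¹' {a} ∩ X' ⁻¹' {b}).indicator (fun _ => r) := by
    intro a b r
    funext ω
    simp [Set.indicator_apply, Set.mem_inter_iff, Set.mem_preimage, Set.mem_singleton_iff]
  have hif2' : ∀ (a b : Fin m) (r : ℝ), (fun ω => if X' ω = a ∧ X ω = b then r else 0)
      = (X' ⁻¹' {a} ∩ X ⁻¹' {b}).indicator (fun _ => r) := by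
    intro a b r
    funext ω
    simp [Set.indicator_apply, Set.mem_inter_iff, Set.mem_preimage, Set.mem_singleton_iff]
  have hifX : ∀ (a : Fin m) (r : ℝ), (fun ω => if X ω = a then r else 0)
      = (X ⁻¹' {a}).indicator (fun _ => r) := by
    intro a r
    funext ω
    simp [Set.indicator_apply, Set.mem_preimage, Set.mem_singleton_iff]
  have hifX' : ∀ (a : Fin m) (r : ℝ), (fun ω => if X' ω = a then r else 0)
      = (X' ⁻¹' {a}).indicator (fun _ => r) := by
    intro a r
    funext ω
    simp [Set.indicator_apply, Set.mem_preimage, Set.mem_singleton_iff]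
  -- integrability and integrals of the if-expressions
  have hint2 : ∀ (a b : Fin m) (r : ℝ), Integrable (fun ω => if X ω = a ∧ X' ω = b then r else 0) ℙ := by
    intro a b r; rw [hif2]; exact hintInd _ ((hsX a).inter (hsX' b)) r
  have hint2' : ∀ (a b : Fin m) (r : ℝ), Integrable (fun ω => if X' ω = a ∧ X ω = b then r else 0) ℙ := by
    intro a b r; rw [hif2']; exact hintInd _ ((hsX' a).inter (hsX b)) r
  have hintX : ∀ (a : Fin m) (r : ℝ), Integrable (fun ω => if X ω = a then r else 0) ℙ := by
    intro a r; rw [hifX]; exact hintInd _ (hsX a) r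
  have hintX' : ∀ (a : Fin m) (r : ℝ), Integrable (fun ω => if X' ω = a then r else 0) ℙ := by
    intro a r; rw [hifX']; exact hintInd _ (hsX' a) r
  have hI2 : ∀ (a b : Fin m) (r : ℝ),
      (∫ ω, (if X ω = a ∧ X' ω = b then r else 0) ∂ℙ) = p * p * r := by
    intro a b r
    rw [hif2, hIind _ ((hsX a).inter (hsX' b)) r, hPXX'r a b]
  have hI2' : ∀ (a b : Fin m) (r : ℝ),
      (∫ ω, (if X' ω = a ∧ X ω = b then r else 0) ∂ℙ) = p * p * r := by
    intro a b r
    rw [hif2', hIind _ ((hsX' a).inter (hsX b)) r, Set.inter_comm, hPXX'r b a]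
  have hIX : ∀ (a : Fin m) (r : ℝ), (∫ ω, (if X ω = a then r else 0) ∂ℙ) = p * r := by
    intro a r
    rw [hifX, hIind _ (hsX a) r, hPXr a]
  have hIX' : ∀ (a : Fin m) (r : ℝ), (∫ ω, (if X' ω = a then r else 0) ∂ℙ) = p * r := by
    intro a r
    rw [hifX', hIind _ (hsX' a) r, hPX'r a]
  -- integral of g
  have hIg : ∀ a b, (∫ ω, g a b ω ∂ℙ) = p * p := by
    intro a b
    have heq : g a b = fun ω => (1/2 : ℝ) *
        ((if X ω = a ∧ X' ω = b then (1:ℝ) else 0) + (if X' ω = a ∧ X ω = b then (1:ℝ) else 0)) := by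
      funext ω
      exact Ematrix_apply (X ω) (X' ω) a b
    rw [heq]
    rw [integral_const_mul]
    rw [integral_add (hint2 a b 1) (hint2' a b 1)]
    rw [hI2 a b 1, hI2' a b 1]
    ring
  -- M entries
  have hMab : ∀ a b, M a b = ∫ ω', Y ω' * g a b ω' ∂ℙ := by
    intro a b; rw [hM]; rfl
  have hMbound : ∀ a b, |M a b| ≤ p * p := by
    intro a b
    rw [hMab]
    calc |∫ ω', Y ω' * g a b ω' ∂ℙ| ≤ ∫ ω', |Y ω' * g a b ω'| ∂ℙ := by
          simpa [Real.norm_eq_abs, abs_mul] using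
            norm_integral_le_integral_norm (fun ω' => Y ω' * g a b ω')
      _ = ∫ ω', g a b ω' ∂ℙ := by
          apply integral_congr_ae
          filter_upwards [hY1] with ω h
          rw [abs_mul, h, one_mul, abs_of_nonneg (hgnn a b ω)]
      _ = p * p := hIg a b
  have hMsymm : ∀ a b, M a b = M b a := by
    intro a b
    rw [hMab, hMab]
    apply integral_congr_ae
    apply Filter.Eventually.of_forall
    intro ω
    show Y ω * Ematrix (X ω) (X' ω) a b = Y ω * Ematrix (X ω) (X' ω) b a
    rw [Ematrix_comm (X ω) (X' ω) a b]
  -- integral of (E*E) entries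
  have hIEE : ∀ a b, (∫ ω, (Ematrix (X ω) (X' ω) * Ematrix (X ω) (X' ω)) a b ∂ℙ)
      = if a = b then c0 else 0 := by
    intro a b
    by_cases hab : a = b
    · subst hab
      have heq : (fun ω => (Ematrix (X ω) (X' ω) * Ematrix (X ω) (X' ω)) a a)
          = fun ω => (if X ω = a ∧ X' ω = a then (1:ℝ)/2 else 0)
            + (if X ω = a then (1:ℝ)/4 else 0) + (if X' ω = a then (1:ℝ)/4 else 0) := by
        funext ω
        rw [EE_apply]
        simp only [eq_self_iff_true, true_and]
      rw [heq]
      have i12 : Integrable (fun ω => (if X ω = a ∧ X' ω = a then (1:ℝ)/2 else 0)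
          + (if X ω = a then (1:ℝ)/4 else 0)) ℙ := (hint2 a a _).add (hintX a _)
      rw [integral_add i12 (hintX' a _), integral_add (hint2 a a _) (hintX a _)]
      rw [hI2 a a _, hIX a _, hIX' a _]
      rw [if_pos rfl, hc0]
      ring
    · rw [if_neg hab]
      have heq : (fun ω => (Ematrix (X ω) (X' ω) * Ematrix (X ω) (X' ω)) a b)
          = fun _ => (0:ℝ) := by
        funext ω
        rw [EE_apply]
        simp [hab]
      rw [heq, integral_zero]
  have hZentry : ∀ ω a k, Z ω a k = Y ω * g a k ω - M a k := by
    intro ω a k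
    rw [hZ ω]
    simp [Matrix.sub_apply, Matrix.smul_apply, smul_eq_mul, hM, hg]
  have hintZprod : ∀ a k b, Integrable
      (fun ω => (Y ω * g a k ω - M a k) * (Y ω * g k b ω - M k b)) ℙ := by
    intro a k b
    have hmeas : Measurable (fun ω => (Y ω * g a k ω - M a k) * (Y ω * g k b ω - M k b)) :=
      ((hYmeas.mul (hgmeas a k)).sub measurable_const).mul
        ((hYmeas.mul (hgmeas k b)).sub measurable_const)
    refine hintBdd _ 4 hmeas ?_
    filter_upwards [hY1] with ω h
    have h1 : |Y ω * g a k ω - M a k| ≤ 2 := by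
      have : |Y ω * g a k ω| ≤ 1 := by
        rw [abs_mul, h, one_mul, abs_of_nonneg (hgnn a k ω)]; exact hgle a k ω
      have h2 : |M a k| ≤ 1 := by
        refine (hMbound a k).trans ?_
        nlinarith
      calc |Y ω * g a k ω - M a k| ≤ |Y ω * g a k ω| + |M a k| := abs_sub _ _
        _ ≤ 2 := by linarith
    have h2 : |Y ω * g k b ω - M k b| ≤ 2 := by
      have : |Y ω * g k b ω| ≤ 1 := by
        rw [abs_mul, h, one_mul, abs_of_nonneg (hgnn k b ω)]; exact hgle k b ω
      have h3 : |M k b| ≤ 1 := by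
        refine (hMbound k b).trans ?_
        nlinarith
      calc |Y ω * g k b ω - M k b| ≤ |Y ω * g k b ω| + |M k b| := abs_sub _ _
        _ ≤ 2 := by linarith
    calc |(Y ω * g a k ω - M a k) * (Y ω * g k b ω - M k b)|
        = |Y ω * g a k ω - M a k| * |Y ω * g k b ω - M k b| := abs_mul _ _
      _ ≤ 2 * 2 := mul_le_mul h1 h2 (abs_nonneg _) (by norm_num)
      _ = 4 := by norm_num
  have hZZ : ∀ a b, (∫ ω, (Z ω * Z ω) a b ∂ℙ) = (if a = b then c0 else 0) - (M * M) a b := by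
    intro a b
    have step0 : (fun ω => (Z ω * Z ω) a b)
        = fun ω => ∑ k, (Y ω * g a k ω - M a k) * (Y ω * g k b ω - M k b) := by
      funext ω
      rw [Matrix.mul_apply]
      exact Finset.sum_congr rfl fun k _ => by rw [hZentry ω a k, hZentry ω k b]
    rw [step0]
    rw [integral_finset_sum _ (fun k _ => hintZprod a k b)]
    have term : ∀ k, (∫ ω, (Y ω * g a k ω - M a k) * (Y ω * g k b ω - M k b) ∂ℙ)
        = (∫ ω, (Y ω * g a k ω) * (Y ω * g k b ω) ∂ℙ) - M a k * M k b := by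
      intro k
      have expand : (fun ω => (Y ω * g a k ω - M a k) * (Y ω * g k b ω - M k b))
          = fun ω => ((Y ω * g a k ω) * (Y ω * g k b ω)
              - M k b * (Y ω * g a k ω)) - (M a k * (Y ω * g k b ω) - M a k * M k b) := by
        funext ω; ring
      rw [expand]
      have i1 : Integrable (fun ω => (Y ω * g a k ω) * (Y ω * g k b ω)
          - M k b * (Y ω * g a k ω)) ℙ := (hintYgYg a k b).sub ((hintYg a k).const_mul _)
      have i2 : Integrable (fun ω => M a k * (Y ω * g k b ω) - M a k * M k b) ℙ :=
        ((hintYg k b).const_mul _).sub (integrable_const _)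
      rw [integral_sub i1 i2,
          integral_sub (hintYgYg a k b) ((hintYg a k).const_mul _),
          integral_sub ((hintYg k b).const_mul _) (integrable_const _)]
      rw [integral_const_mul, integral_const_mul, integral_const]
      rw [← hMab a k, ← hMab k b]
      rw [probReal_univ]
      simp only [ENNReal.toReal_one, one_smul]
      ring
    rw [Finset.sum_congr rfl fun k _ => term k]
    rw [Finset.sum_sub_distrib]
    have sumFG : (∑ k, ∫ ω, (Y ω * g a k ω) * (Y ω * g k b ω) ∂ℙ)
        = if a = b then c0 else 0 := by
      rw [← integral_finset_sum _ (fun k _ => hintYgYg a k b)]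
      rw [← hIEE a b]
      apply integral_congr_ae
      filter_upwards [hY] with ω h
      have hy2 : Y ω * Y ω = 1 := by rcases h with h | h <;> rw [h] <;> norm_num
      rw [Matrix.mul_apply]
      rw [Finset.sum_congr rfl (fun k _ => show (Y ω * g a k ω) * (Y ω * g k b ω)
        = Y ω * Y ω * (g a k ω * g k b ω) by ring)]
      rw [← Finset.mul_sum, hy2, one_mul]
    rw [sumFG, Matrix.mul_apply]
  -- symmetry of M*M
  have hMMsymm : ∀ a b, (M * M) a b = (M * M) b a := by
    intro a b
    rw [Matrix.mul_apply, Matrix.mul_apply]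
    apply Finset.sum_congr rfl
    intro k _
    rw [hMsymm a k, hMsymm k b]; ring
  have hMMbound : ∀ a b, |(M * M) a b| ≤ p^3 := by
    intro a b
    rw [Matrix.mul_apply]
    calc |∑ k, M a k * M k b| ≤ ∑ k, |M a k * M k b| := Finset.abs_sum_le_sum_abs _ _
      _ ≤ ∑ _k : Fin m, (p*p) * (p*p) := by
          apply Finset.sum_le_sum
          intro k _
          rw [abs_mul]
          exact mul_le_mul (hMbound a k) (hMbound k b) (abs_nonneg _) (by positivity)
      _ = m * (p*p*(p*p)) := by rw [Finset.sum_const, Finset.card_univ]; simp [mul_comm]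
      _ ≤ p^3 := by
          rw [hp]
          have : (m:ℝ) ≠ 0 := ne_of_gt hm0
          field_simp
          nlinarith
  have hMMnn : ∀ a, 0 ≤ (M * M) a a := by
    intro a
    rw [Matrix.mul_apply]
    apply Finset.sum_nonneg
    intro k _
    rw [hMsymm k a]
    exact mul_self_nonneg _
  constructor
  · -- a.s. bound
    filter_upwards [hY] with ω h
    rw [hZ ω]
    have tri : opNorm (Y ω • Ematrix (X ω) (X' ω) - M)
        ≤ opNorm (Y ω • Ematrix (X ω) (X' ω)) + opNorm M := by
      unfold opNorm
      rw [map_sub]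
      exact norm_sub_le _ _
    have hE1 : opNorm (Ematrix (X ω) (X' ω)) ≤ 1 :=
      opNorm_le_rowsum _ (fun a b => Ematrix_comm _ _ _ _) (by norm_num)
        (fun a => Ematrix_rowsum _ _ _)
    have hYE : opNorm (Y ω • Ematrix (X ω) (X' ω)) ≤ 1 := by
      rcases h with h | h
      · rw [h, one_smul]; exact hE1
      · rw [h, neg_one_smul]
        unfold opNorm
        rw [map_neg, norm_neg]
        exact hE1
    have hMnorm : opNorm M ≤ 1 := by
      apply opNorm_le_rowsum _ hMsymm (by norm_num)
      intro a
      calc ∑ b, |M a b| ≤ ∑ _b : Fin m, p * p := Finset.sum_le_sum fun b _ => hMbound a b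
        _ = m * (p * p) := by rw [Finset.sum_const, Finset.card_univ]; simp [mul_comm]
        _ = p := by rw [hp]; field_simp
        _ ≤ 1 := by linarith
    linarith
  · -- variance bound
    have hsymN : ∀ a b, (Matrix.of fun a b => ∫ ω, (Z ω * Z ω) a b ∂ℙ) a b
        = (Matrix.of fun a b => ∫ ω, (Z ω * Z ω) a b ∂ℙ) b a := by
      intro a b
      simp only [Matrix.of_apply]
      rw [hZZ a b, hZZ b a, hMMsymm a b]
      congr 1
      by_cases hab : a = b <;> simp [hab, eq_comm]
    apply opNorm_le_rowsum _ hsymN (by positivity)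
    intro a
    have hc0nn : 0 ≤ c0 := by rw [hc0]; positivity
    have entrybound : ∀ b, |(Matrix.of fun a b => ∫ ω, (Z ω * Z ω) a b ∂ℙ) a b|
        ≤ if a = b then c0 else p^3 := by
      intro b
      simp only [Matrix.of_apply]
      rw [hZZ a b]
      by_cases hab : a = b
      · subst hab
        rw [if_pos rfl, if_pos rfl]
        have h1 : 0 ≤ (M * M) a a := hMMnn a
        have h2 : (M * M) a a ≤ p^3 := (abs_le.mp (hMMbound a a)).2
        have h3 : p^3 ≤ 2 * c0 := by
          rw [hc0]
          nlinarith [hp0, hph]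
        rw [abs_le]
        constructor <;> linarith
      · rw [if_neg hab, if_neg hab, zero_sub, abs_neg]
        exact hMMbound a b
    calc ∑ b, |(Matrix.of fun a b => ∫ ω, (Z ω * Z ω) a b ∂ℙ) a b|
        ≤ ∑ b, if a = b then c0 else p^3 := Finset.sum_le_sum fun b _ => entrybound b
      _ = ∑ b : Fin m, (p^3 + if a = b then c0 - p^3 else 0) := by
          apply Finset.sum_congr rfl
          intro b _
          split_ifs <;> ring
      _ = m * p^3 + (c0 - p^3) := by
          rw [Finset.sum_add_distrib, Finset.sum_const, Finset.card_univ, Finset.sum_ite_eq]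
          simp
      _ ≤ 1 / m := by
          have h1m : (1:ℝ)/m = p := by rw [hp, one_div]
          rw [h1m]
          have hmp : (m:ℝ) * p = 1 := by
            rw [hp]; field_simp
          have hmp3 : (m:ℝ) * p^3 = p^2 := by
            calc (m:ℝ) * p^3 = ((m:ℝ) * p) * p^2 := by ring
              _ = p^2 := by rw [hmp, one_mul]
          rw [hmp3, hc0]
          have hkey : 0 ≤ (1/2 - p) * (1 - p) * p :=
            mul_nonneg (mul_nonneg (by linarith) (by linarith)) hp0.le
          nlinarith [hkey]


end
end

section
/- Truncated weighted sum with projections. Let φ∈Ψ and δ>0 with k(δ) ≤ m−1, where k(δ) is the largest k≤m with λ_k^{−1}≥δ² (convention λ_k^{−1}=+∞ when λ_k=0, and k(δ)=0 if λ₁^{−1}<δ²). Then ∑_{k=1}^m (λ_k^{−1}∧δ²)·‖P_L φ_k‖² ≤ (c+3)·δ²·φ(k(δ)+1). -/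
open scoped Classical BigOperators

noncomputable section

/-- `k(δ)`: the largest `k ≤ m` with `λ_k⁻¹ ≥ δ²` (with the convention `λ_k⁻¹ = +∞` when
`λ_k = 0`), and `k(δ) = 0` if there is no such `k`. -/
def kDelta (m : ℕ) (lam : ℕ → ℝ) (δ : ℝ) : ℕ :=
  Finset.sup ((Finset.Icc 1 m).filter (fun k => lam k = 0 ∨ δ ^ 2 ≤ (lam k)⁻¹)) id

/-- the truncated weight `λ_k⁻¹ ∧ δ²` (`= δ²` when `λ_k = 0`) -/
def wCoef (lam : ℕ → ℝ) (δ : ℝ) (k : ℕ) : ℝ :=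
  if lam k = 0 then δ ^ 2 else min (lam k)⁻¹ (δ ^ 2)

/-- Abel-summation style bound. -/
lemma abel_bound (s m : ℕ) (hs : 1 ≤ s) (hsm : s ≤ m) (a g : ℕ → ℝ) (F : ℝ)
    (ha0 : ∀ k, s ≤ k → k ≤ m → 0 ≤ a k)
    (hamono : ∀ k, s ≤ k → k < m → a (k + 1) ≤ a k)
    (hg0 : ∀ k, 0 ≤ g k)
    (hG : ∀ t, s ≤ t → t ≤ m → ∑ j ∈ Finset.Icc 1 t, g j ≤ (t : ℝ) * F) :
    ∑ k ∈ Finset.Icc s m, a k * g k ≤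
      F * ((∑ k ∈ Finset.Icc s m, a k) + ((s : ℝ) - 1) * a s) := by
  have key : ∀ t, s ≤ t → t ≤ m →
      ∑ k ∈ Finset.Icc s t, a k * g k ≤
        F * ((∑ k ∈ Finset.Icc s t, a k) + ((s : ℝ) - 1) * a s)
          + a t * ((∑ j ∈ Finset.Icc 1 t, g j) - (t : ℝ) * F) := by
    intro t
    induction t with
    | zero => intro h _; omega
    | succ n ih =>
      intro hst htm
      rcases eq_or_lt_of_le hst with hbase | hlt
      · -- base case : s = n + 1
        rw [← hbase]
        rw [Finset.Icc_self, Finset.sum_singleton, Finset.sum_singleton]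
        have hGs : g s ≤ ∑ j ∈ Finset.Icc 1 s, g j :=
          Finset.single_le_sum (fun j _ => hg0 j) (Finset.mem_Icc.mpr ⟨hs, le_refl s⟩)
        have has : 0 ≤ a s := ha0 s (le_refl s) hsm
        nlinarith [mul_le_mul_of_nonneg_left hGs has]
      · -- step case : s ≤ n
        have hsn : s ≤ n := by omega
        have hnm : n ≤ m := by omega
        have H := ih hsn hnm
        have e1 : ∑ k ∈ Finset.Icc s (n + 1), a k * g k
            = (∑ k ∈ Finset.Icc s n, a k * g k) + a (n + 1) * g (n + 1) :=
          Finset.sum_Icc_succ_top (by omega) _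
        have e2 : ∑ k ∈ Finset.Icc s (n + 1), a k
            = (∑ k ∈ Finset.Icc s n, a k) + a (n + 1) :=
          Finset.sum_Icc_succ_top (by omega) _
        have e3 : ∑ j ∈ Finset.Icc 1 (n + 1), g j
            = (∑ j ∈ Finset.Icc 1 n, g j) + g (n + 1) :=
          Finset.sum_Icc_succ_top (by omega) _
        have h1 : a (n + 1) ≤ a n := hamono n hsn (by omega)
        have h2 : ∑ j ∈ Finset.Icc 1 n, g j ≤ (n : ℝ) * F := hG n hsn hnm
        have hprod : 0 ≤ (a n - a (n + 1)) * ((n : ℝ) * F - ∑ j ∈ Finset.Icc 1 n, g j) :=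
          mul_nonneg (by linarith) (by linarith)
        rw [e1, e2, e3]
        push_cast
        nlinarith [H, hprod]
  have hm' := key m hsm (le_refl m)
  have hGm := hG m hsm (le_refl m)
  have ham : 0 ≤ a m := ha0 m hsm (le_refl m)
  nlinarith [hm', mul_nonneg ham (sub_nonneg.mpr hGm)]

set_option maxHeartbeats 1600000 in
/-- **Truncated weighted sum with projections.** Let `φ ∈ Ψ` and `δ > 0` with `k(δ) ≤ m−1`.
Then `∑_{k=1}^m (λ_k⁻¹ ∧ δ²) ‖P_L φ_k‖² ≤ (c+3) δ² φ(k(δ)+1)`. -/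
theorem truncated_weighted_sum_with_projections
    (m : ℕ) (hm : 2 ≤ m) (c : ℝ) (hc : 0 < c)
    (lam : ℕ → ℝ) (k0 : ℕ)
    (hlam_nonneg : ∀ k, 1 ≤ k → k ≤ m → 0 ≤ lam k)
    (hlam_mono : ∀ k, 1 ≤ k → k < m → lam k ≤ lam (k + 1))
    (hk0_mem : 1 ≤ k0 ∧ k0 ≤ m) (hk0_pos : 0 < lam k0)
    (hk0_min : ∀ k, 1 ≤ k → k ≤ m → 0 < lam k → k0 ≤ k)
    (hratio : ∀ k, k0 ≤ k → k < m → ((k : ℝ) + 1) / lam (k + 1) ≤ (k : ℝ) / lam k)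
    (hgap : ∀ k, k0 ≤ k → k < m → lam (k + 1) ≤ c * lam k)
    (hsum : ∀ s, k0 ≤ s → s ≤ m → ∑ k ∈ Finset.Icc s m, (lam k)⁻¹ ≤ c * s / lam s)
    (phi : ℕ → EuclideanSpace ℝ (Fin m))
    (horth : Orthonormal ℝ (fun k : Fin m => phi ((k : ℕ) + 1)))
    (L : Submodule ℝ (EuclideanSpace ℝ (Fin m)))
    (f : ℕ → ℝ)
    (hf_mono : ∀ k, k < m → f k ≤ f (k + 1))
    (hf_ratio : ∀ k, 1 ≤ k → k < m → f (k + 1) / ((k : ℝ) + 1) ≤ f k / k)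
    (hf_dom : ∀ k, k ≤ m → ∑ j ∈ Finset.Icc 1 k, projNormSq L (phi j) ≤ f k)
    (δ : ℝ) (hδ : 0 < δ) (hkδ : kDelta m lam δ ≤ m - 1) :
    ∑ k ∈ Finset.Icc 1 m, wCoef lam δ k * projNormSq L (phi k) ≤
      (c + 3) * δ ^ 2 * f (kDelta m lam δ + 1) := by
  classical
  have hm1 : 1 ≤ m := by omega
  set S : Finset ℕ :=
    (Finset.Icc 1 m).filter (fun k => lam k = 0 ∨ δ ^ 2 ≤ (lam k)⁻¹) with hSdef
  set K := kDelta m lam δ with hKdef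
  have hKS : K = S.sup id := hKdef
  clear_value K
  have hKm : K + 1 ≤ m := by omega
  have hKlt : K < m := by omega
  -- monotonicity of lam on [1, m]
  have lam_mono : ∀ i j, 1 ≤ i → i ≤ j → j ≤ m → lam i ≤ lam j := by
    intro i j h1 hij hjm
    induction j with
    | zero => omega
    | succ n ih =>
      rcases Nat.lt_or_ge i (n + 1) with h | h
      · have hi : lam i ≤ lam n := ih (by omega) (by omega)
        exact hi.trans (hlam_mono n (by omega) (by omega))
      · have : i = n + 1 := by omega
        rw [this]
  have hδ2 : (0 : ℝ) < δ ^ 2 := by positivity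
  -- weights below K are δ²
  have hw1 : ∀ k, 1 ≤ k → k ≤ K → wCoef lam δ k = δ ^ 2 := by
    intro k h1 hk
    by_cases h0 : lam k = 0
    · simp [wCoef, h0]
    · have hSne : S.Nonempty := by
        by_contra hne
        rw [Finset.not_nonempty_iff_eq_empty] at hne
        have : K = 0 := by rw [hKS, hne]; rfl
        omega
      obtain ⟨b, hb, hsup⟩ := Finset.exists_mem_eq_sup S hSne id
      have hKb : K = b := by rw [hKS, hsup]; rfl
      rw [hSdef, Finset.mem_filter, Finset.mem_Icc] at hb
      have hbm : b ≤ m := hb.1.2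
      have hkpos : 0 < lam k :=
        lt_of_le_of_ne (hlam_nonneg k h1 (by omega)) (Ne.symm h0)
      have hlamkK : lam k ≤ lam K := lam_mono k K h1 hk (by omega)
      rcases hb.2 with hK0 | hKinv
      · exfalso
        rw [← hKb] at hK0
        rw [hK0] at hlamkK
        linarith
      · rw [← hKb] at hKinv
        have hKpos : 0 < lam K := by
          rcases lt_or_eq_of_le (hlam_nonneg K (by omega) (by omega)) with h | h
          · exact h
          · exfalso; rw [← h] at hKinv; simp at hKinv; linarith
        have : δ ^ 2 ≤ (lam k)⁻¹ :=
          hKinv.trans (inv_anti₀ hkpos hlamkK)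
        simp [wCoef, h0, min_eq_right this]
  -- above K : lam k ≠ 0 and (lam k)⁻¹ < δ²
  have hw2 : ∀ k, K + 1 ≤ k → k ≤ m → lam k ≠ 0 ∧ (lam k)⁻¹ < δ ^ 2 := by
    intro k hs hk
    by_contra h
    push_neg at h
    have hpred : lam k = 0 ∨ δ ^ 2 ≤ (lam k)⁻¹ := by
      by_cases h0 : lam k = 0
      · exact Or.inl h0
      · exact Or.inr (h h0)
    have hmem : k ∈ S := by
      rw [hSdef, Finset.mem_filter, Finset.mem_Icc]
      exact ⟨⟨by omega, hk⟩, hpred⟩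
    have : k ≤ K := by
      rw [hKS]; exact Finset.le_sup (f := id) hmem
    omega
  have lam_pos : ∀ k, K + 1 ≤ k → k ≤ m → 0 < lam k := fun k h1 h2 =>
    lt_of_le_of_ne (hlam_nonneg k (by omega) h2) (Ne.symm (hw2 k h1 h2).1)
  have hspos : (0 : ℝ) < ((K : ℝ) + 1) := by positivity
  have hsm : K + 1 ≤ m := hKm
  have hk0s : k0 ≤ K + 1 := hk0_min (K + 1) (by omega) hKm (lam_pos (K + 1) le_rfl hKm)
  -- nonnegativity facts
  have hg0 : ∀ k, 0 ≤ projNormSq L (phi k) := fun k => sq_nonneg _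
  have hGnn : ∀ t, 0 ≤ ∑ j ∈ Finset.Icc 1 t, projNormSq L (phi j) := fun t =>
    Finset.sum_nonneg fun j _ => hg0 j
  have hfs0 : 0 ≤ f (K + 1) := le_trans (hGnn (K + 1)) (hf_dom (K + 1) hKm)
  -- ratio bound for f : f t * (K+1) ≤ f (K+1) * t for K+1 ≤ t ≤ m
  have hrat : ∀ t, K + 1 ≤ t → t ≤ m → f t * ((K : ℝ) + 1) ≤ f (K + 1) * t := by
    intro t hst htm
    induction t with
    | zero => omega
    | succ n ih =>
      rcases eq_or_lt_of_le hst with hbase | hlt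
      · rw [← hbase]; push_cast; linarith [sq_nonneg (f (K+1))]
      · have hsn : K + 1 ≤ n := by omega
        have hn : f n * ((K : ℝ) + 1) ≤ f (K + 1) * n := ih hsn (by omega)
        have hr := hf_ratio n (by omega) (by omega)
        have hnpos : (0 : ℝ) < (n : ℝ) := by exact_mod_cast Nat.pos_of_ne_zero (by omega)
        have hn1pos : (0 : ℝ) < (n : ℝ) + 1 := by positivity
        have hcross : f (n + 1) * n ≤ f n * ((n : ℝ) + 1) :=
          (div_le_div_iff₀ hn1pos hnpos).mp hr
        push_cast
        nlinarith [hn, hcross, hspos]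
  -- the cumulative bound needed by abel_bound
  have hG : ∀ t, K + 1 ≤ t → t ≤ m →
      ∑ j ∈ Finset.Icc 1 t, projNormSq L (phi j) ≤ (t : ℝ) * (f (K + 1) / ((K : ℝ) + 1)) := by
    intro t hst htm
    have h1 : ∑ j ∈ Finset.Icc 1 t, projNormSq L (phi j) ≤ f t := hf_dom t htm
    have h2 := hrat t hst htm
    rw [mul_div_assoc']
    rw [le_div_iff₀ hspos]
    nlinarith [h1, hspos]
  -- apply Abel bound
  have habel := abel_bound (K + 1) m (by omega) hKm (fun k => (lam k)⁻¹)
    (fun k => projNormSq L (phi k)) (f (K + 1) / ((K : ℝ) + 1))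
    (fun k h1 h2 => inv_nonneg.mpr (hlam_nonneg k (by omega) h2))
    (fun k h1 h2 => inv_anti₀ (lam_pos k h1 (by omega)) (hlam_mono k (by omega) h2))
    hg0 (by intro t h1 h2; push_cast; exact hG t h1 h2)
  -- sum of inverses bound
  have hsums := hsum (K + 1) hk0s hKm
  have haspos : 0 < lam (K + 1) := lam_pos (K + 1) le_rfl hKm
  have hcs : c * ((K : ℝ) + 1) / lam (K + 1) = c * ((K : ℝ) + 1) * (lam (K + 1))⁻¹ := by
    rw [div_eq_mul_inv]
  have hsums' : ∑ k ∈ Finset.Icc (K + 1) m, (lam k)⁻¹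
      ≤ c * ((K : ℝ) + 1) * (lam (K + 1))⁻¹ := by
    rw [← hcs]
    have := hsums
    push_cast at this ⊢
    exact this
  -- split the main sum
  have hsplit : ∑ k ∈ Finset.Icc 1 m, wCoef lam δ k * projNormSq L (phi k)
      = (∑ k ∈ Finset.Icc 1 K, wCoef lam δ k * projNormSq L (phi k))
        + ∑ k ∈ Finset.Icc (K + 1) m, wCoef lam δ k * projNormSq L (phi k) := by
    rw [show Finset.Icc 1 m = Finset.Ioc 0 m from Finset.Icc_add_one_left_eq_Ioc 0 m,
      show Finset.Icc 1 K = Finset.Ioc 0 K from Finset.Icc_add_one_left_eq_Ioc 0 K,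
      show Finset.Icc (K + 1) m = Finset.Ioc K m from Finset.Icc_add_one_left_eq_Ioc K m,
      Finset.sum_Ioc_consecutive _ (Nat.zero_le K) (show K ≤ m by omega)]
  -- rewrite each piece
  have hT1eq : ∑ k ∈ Finset.Icc 1 K, wCoef lam δ k * projNormSq L (phi k)
      = δ ^ 2 * ∑ k ∈ Finset.Icc 1 K, projNormSq L (phi k) := by
    rw [Finset.mul_sum]
    refine Finset.sum_congr rfl fun k hk => ?_
    rw [Finset.mem_Icc] at hk
    rw [hw1 k hk.1 hk.2]
  have hT2eq : ∑ k ∈ Finset.Icc (K + 1) m, wCoef lam δ k * projNormSq L (phi k)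
      = ∑ k ∈ Finset.Icc (K + 1) m, (lam k)⁻¹ * projNormSq L (phi k) := by
    refine Finset.sum_congr rfl fun k hk => ?_
    rw [Finset.mem_Icc] at hk
    obtain ⟨hne, hlt'⟩ := hw2 k hk.1 hk.2
    rw [wCoef, if_neg hne, min_eq_left (le_of_lt hlt')]
  -- bound for the first piece
  have hT1 : δ ^ 2 * ∑ k ∈ Finset.Icc 1 K, projNormSq L (phi k) ≤ δ ^ 2 * f (K + 1) := by
    apply mul_le_mul_of_nonneg_left _ (le_of_lt hδ2)
    calc ∑ k ∈ Finset.Icc 1 K, projNormSq L (phi k) ≤ f K := hf_dom K (by omega)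
      _ ≤ f (K + 1) := hf_mono K hKlt
  -- bound for the second piece
  have has_le : (lam (K + 1))⁻¹ ≤ δ ^ 2 := le_of_lt (hw2 (K + 1) le_rfl hKm).2
  have has_nn : 0 ≤ (lam (K + 1))⁻¹ := inv_nonneg.mpr (le_of_lt haspos)
  have hFnn : 0 ≤ f (K + 1) / ((K : ℝ) + 1) := div_nonneg hfs0 (le_of_lt hspos)
  have hFs : f (K + 1) / ((K : ℝ) + 1) * ((K : ℝ) + 1) = f (K + 1) :=
    div_mul_cancel₀ _ (ne_of_gt hspos)
  have hT2 : ∑ k ∈ Finset.Icc (K + 1) m, (lam k)⁻¹ * projNormSq L (phi k)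
      ≤ (c + 1) * δ ^ 2 * f (K + 1) := by
    have hstep : ∑ k ∈ Finset.Icc (K + 1) m, (lam k)⁻¹ * projNormSq L (phi k)
        ≤ (f (K + 1) / ((K : ℝ) + 1)) *
          ((∑ k ∈ Finset.Icc (K + 1) m, (lam k)⁻¹) + (((K : ℕ) + 1 : ℝ) - 1) * (lam (K + 1))⁻¹) := by
      have := habel
      push_cast at this ⊢
      exact this
    have h2 : (f (K + 1) / ((K : ℝ) + 1)) *
          ((∑ k ∈ Finset.Icc (K + 1) m, (lam k)⁻¹) + (((K : ℕ) + 1 : ℝ) - 1) * (lam (K + 1))⁻¹)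
        ≤ (c + 1) * δ ^ 2 * f (K + 1) := by
      push_cast
      set q := f (K + 1) / ((K : ℝ) + 1) with hq
      clear_value q
      have hin : (∑ k ∈ Finset.Icc (K + 1) m, (lam k)⁻¹) + ((K : ℝ) + 1 - 1) * (lam (K + 1))⁻¹
          ≤ c * ((K : ℝ) + 1) * (lam (K + 1))⁻¹ + ((K : ℝ) + 1) * (lam (K + 1))⁻¹ := by
        nlinarith [hsums', has_nn]
      have l1 := mul_le_mul_of_nonneg_left hin hFnn
      have l2 : q * (c * ((K : ℝ) + 1) * (lam (K + 1))⁻¹ + ((K : ℝ) + 1) * (lam (K + 1))⁻¹)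
          = (c + 1) * (lam (K + 1))⁻¹ * f (K + 1) := by
        rw [← hFs]; ring
      have l3 : (c + 1) * (lam (K + 1))⁻¹ * f (K + 1) ≤ (c + 1) * δ ^ 2 * f (K + 1) := by
        have := mul_nonneg (show (0:ℝ) ≤ c + 1 by linarith)
          (mul_nonneg (sub_nonneg.mpr has_le) hfs0)
        nlinarith [this]
      linarith [l1, l2.le, l2.ge, l3]
    exact hstep.trans h2
  -- combine
  have hfinal : 0 ≤ δ ^ 2 * f (K + 1) := mul_nonneg (le_of_lt hδ2) hfs0
  rw [hsplit, hT1eq, hT2eq]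
  nlinarith [hT1, hT2, hfinal]

end
end

section
/- Truncated weighted eigenvalue sum. For every δ>0, ∑_{k=1}^m (λ_k^{−1}∧δ²) ≤ (c+1)·δ²·(k(δ)+1), where k(δ) is the largest k≤m with λ_k^{−1}≥δ² (convention λ_k^{−1}=+∞ when λ_k=0, and k(δ)=0 if λ₁^{−1}<δ²). -/
open scoped Classical BigOperators

noncomputable section

/-- **Truncated weighted eigenvalue sum.** Under the spectral assumptions on the eigenvalues
`0 ≤ λ₁ ≤ … ≤ λ_m` of `W`, for every `δ > 0`,
`∑_{k=1}^m (λ_k⁻¹ ∧ δ²) ≤ (c+1) δ² (k(δ)+1)`. -/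
theorem truncated_weighted_eigenvalue_sum
    (m : ℕ) (hm : 2 ≤ m) (c : ℝ) (hc : 0 < c)
    (lam : ℕ → ℝ) (k0 : ℕ)
    (hlam_nonneg : ∀ k, 1 ≤ k → k ≤ m → 0 ≤ lam k)
    (hlam_mono : ∀ k, 1 ≤ k → k < m → lam k ≤ lam (k + 1))
    (hk0_mem : 1 ≤ k0 ∧ k0 ≤ m) (hk0_pos : 0 < lam k0)
    (hk0_min : ∀ k, 1 ≤ k → k ≤ m → 0 < lam k → k0 ≤ k)
    (hratio : ∀ k, k0 ≤ k → k < m → ((k : ℝ) + 1) / lam (k + 1) ≤ (k : ℝ) / lam k)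
    (hgap : ∀ k, k0 ≤ k → k < m → lam (k + 1) ≤ c * lam k)
    (hsum : ∀ s, k0 ≤ s → s ≤ m → ∑ k ∈ Finset.Icc s m, (lam k)⁻¹ ≤ c * s / lam s)
    (δ : ℝ) (hδ : 0 < δ) :
    ∑ k ∈ Finset.Icc 1 m, wCoef lam δ k ≤ (c + 1) * δ ^ 2 * (kDelta m lam δ + 1) := by
  set K := kDelta m lam δ with hKdef
  have hδ2 : (0:ℝ) < δ ^ 2 := by positivity
  have hKm : K ≤ m := by
    refine Finset.sup_le fun k hk => ?_
    exact (Finset.mem_Icc.1 (Finset.mem_filter.1 hk).1).2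
  have hnot : ∀ k, K < k → k ≤ m → 0 < lam k ∧ (lam k)⁻¹ < δ ^ 2 := by
    intro k hk1 hk2
    have hk1' : 1 ≤ k := Nat.one_le_iff_ne_zero.2 (by omega)
    by_cases h0 : lam k = 0 ∨ δ ^ 2 ≤ (lam k)⁻¹
    · exfalso
      have : k ≤ K := Finset.le_sup (f := id)
        (Finset.mem_filter.2 ⟨Finset.mem_Icc.2 ⟨hk1', hk2⟩, h0⟩)
      omega
    · push_neg at h0
      have hnn := hlam_nonneg k hk1' hk2
      exact ⟨lt_of_le_of_ne hnn (Ne.symm h0.1), h0.2⟩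
  have hw_le : ∀ k, wCoef lam δ k ≤ δ ^ 2 := by
    intro k; unfold wCoef; split
    · exact le_rfl
    · exact min_le_right _ _
  have hw_nonneg : ∀ k, K < k → k ≤ m → wCoef lam δ k = (lam k)⁻¹ := by
    intro k h1 h2
    obtain ⟨hpos, hlt⟩ := hnot k h1 h2
    unfold wCoef
    rw [if_neg (ne_of_gt hpos), min_eq_left (le_of_lt hlt)]
  have hIcc : Finset.Icc 1 m = Finset.Ioc 0 m := by
    rw [← Finset.Icc_add_one_left_eq_Ioc, zero_add]
  have hsplit : ∑ k ∈ Finset.Ioc 0 K, wCoef lam δ k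
      + ∑ k ∈ Finset.Ioc K m, wCoef lam δ k = ∑ k ∈ Finset.Icc 1 m, wCoef lam δ k := by
    rw [hIcc]
    exact Finset.sum_Ioc_consecutive _ (Nat.zero_le K) hKm
  have hfirst : ∑ k ∈ Finset.Ioc 0 K, wCoef lam δ k ≤ (K : ℝ) * δ ^ 2 := by
    calc ∑ k ∈ Finset.Ioc 0 K, wCoef lam δ k
        ≤ (Finset.Ioc 0 K).card • δ ^ 2 :=
          Finset.sum_le_card_nsmul _ _ _ (fun k _ => hw_le k)
      _ = (K : ℝ) * δ ^ 2 := by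
          rw [Nat.card_Ioc, Nat.sub_zero, nsmul_eq_mul]
  have hsecond : ∑ k ∈ Finset.Ioc K m, wCoef lam δ k ≤ c * ((K : ℝ) + 1) * δ ^ 2 := by
    by_cases hKltm : K < m
    · have hKsm : K + 1 ≤ m := hKltm
      obtain ⟨hpos, hlt⟩ := hnot (K + 1) (Nat.lt_succ_self K) hKsm
      have hk0le : k0 ≤ K + 1 :=
        hk0_min (K + 1) (Nat.succ_le_succ (Nat.zero_le K)) hKsm hpos
      have hsum' := hsum (K + 1) hk0le hKsm
      have heq : ∑ k ∈ Finset.Ioc K m, wCoef lam δ k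
          = ∑ k ∈ Finset.Icc (K + 1) m, (lam k)⁻¹ := by
        rw [Finset.Icc_add_one_left_eq_Ioc]
        exact Finset.sum_congr rfl fun k hk => by
          obtain ⟨h1, h2⟩ := Finset.mem_Ioc.1 hk
          exact hw_nonneg k h1 h2
      rw [heq]
      refine hsum'.trans ?_
      have h1 : c * (↑(K + 1) : ℝ) / lam (K + 1)
          = c * ((K : ℝ) + 1) * (lam (K + 1))⁻¹ := by
        push_cast; ring
      rw [h1]
      have hcK : (0:ℝ) ≤ c * ((K : ℝ) + 1) := by positivity
      exact mul_le_mul_of_nonneg_left (le_of_lt hlt) hcK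
    · have : Finset.Ioc K m = ∅ := Finset.Ioc_eq_empty (by omega)
      rw [this, Finset.sum_empty]
      positivity
  have hKnn : (0:ℝ) ≤ (K : ℝ) := Nat.cast_nonneg K
  calc ∑ k ∈ Finset.Icc 1 m, wCoef lam δ k
      = ∑ k ∈ Finset.Ioc 0 K, wCoef lam δ k + ∑ k ∈ Finset.Ioc K m, wCoef lam δ k :=
        hsplit.symm
    _ ≤ (K : ℝ) * δ ^ 2 + c * ((K : ℝ) + 1) * δ ^ 2 := add_le_add hfirst hsecond
    _ ≤ (c + 1) * δ ^ 2 * ((K : ℝ) + 1) := by nlinarith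


end
end
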